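/- Suppose a(b f) − b(a f) = f for all f ∈ D, a φ₀ = 0 for some φ₀ ∈ D, and let Θ : D → D be a linear map that is symmetric (⟨Θ f, g⟩ = ⟨f, Θ g⟩ for all f, g ∈ D) and satisfies Θ(a f) = b†(Θ f) for all f ∈ D. Set Ψ₀ := Θ φ₀, φₙ := (1/√(n!)) bⁿ φ₀ and Ψₙ := (1/√(n!)) (a†)ⁿ Ψ₀. Then b† Ψ₀ = 0 and Θ φₙ = Ψₙ for every n ≥ 0. -/

import Mathlib

/-- If `a, b` satisfy `[a,b] = 1` on `D`, `a φ₀ = 0`, and the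
symmetric linear map `Θ : D → D` satisfies `Θ a = b† Θ` on `D`, then
`Ψ₀ := Θ φ₀` satisfies `b† Ψ₀ = 0`, and `Θ φₙ = Ψₙ` for all `n`, where
`φₙ = (1/√(n!)) bⁿ φ₀` and `Ψₙ = (1/√(n!)) (a†)ⁿ Ψ₀`. -/
theorem theta_conjugate_maps_phi_to_psi
    {H : Type*} [NormedAddCommGroup H] [InnerProductSpace ℂ H] [CompleteSpace H]
    (D : Submodule ℂ H) (hdense : Dense (D : Set H))
    (a b adjA adjB : D →ₗ[ℂ] D)
    (ha : ∀ f g : D, (inner ℂ ((a f : H)) (g : H) : ℂ) = inner ℂ (f : H) ((adjA g : H)))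
    (hb : ∀ f g : D, (inner ℂ ((b f : H)) (g : H) : ℂ) = inner ℂ (f : H) ((adjB g : H)))
    (hab : ∀ f : D, a (b f) - b (a f) = f)
    (φ₀ : D) (hφ0 : a φ₀ = 0)
    (Θ : D →ₗ[ℂ] D)
    (hΘsym : ∀ f g : D, (inner ℂ ((Θ f : H)) (g : H) : ℂ) = inner ℂ (f : H) ((Θ g : H)))
    (hΘconj : ∀ f : D, Θ (a f) = adjB (Θ f))
    (Ψ₀ : D) (hΨ0def : Ψ₀ = Θ φ₀)
    (φ Ψ : ℕ → D)
    (hφ : ∀ n : ℕ, φ n = ((1 / Real.sqrt n.factorial : ℝ) : ℂ) • (b ^ n) φ₀)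
    (hΨ : ∀ n : ℕ, Ψ n = ((1 / Real.sqrt n.factorial : ℝ) : ℂ) • (adjA ^ n) Ψ₀) :
    adjB Ψ₀ = 0 ∧ ∀ n : ℕ, Θ (φ n) = Ψ n := by
  -- Θ b = adjA Θ on D
  have key : ∀ f : D, Θ (b f) = adjA (Θ f) := by
    intro f
    have h : ∀ g : D, (inner ℂ ((Θ (b f) : H)) (g : H) : ℂ)
        = inner ℂ ((adjA (Θ f) : H)) (g : H) := by
      intro g
      calc (inner ℂ ((Θ (b f) : H)) (g : H) : ℂ)
          = inner ℂ ((b f : H)) ((Θ g : H)) := hΘsym _ _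
        _ = inner ℂ (f : H) ((adjB (Θ g) : H)) := hb _ _
        _ = inner ℂ (f : H) ((Θ (a g) : H)) := by rw [← hΘconj]
        _ = inner ℂ ((Θ f : H)) ((a g : H)) := (hΘsym f (a g)).symm
        _ = inner ℂ ((adjA (Θ f) : H)) (g : H) := by
            have := ha g (Θ f)
            calc (inner ℂ ((Θ f : H)) ((a g : H)) : ℂ)
                = starRingEnd ℂ (inner ℂ ((a g : H)) ((Θ f : H))) := by
                  rw [inner_conj_symm]
              _ = starRingEnd ℂ (inner ℂ (g : H) ((adjA (Θ f) : H))) := by rw [this]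
              _ = inner ℂ ((adjA (Θ f) : H)) (g : H) := by rw [inner_conj_symm]
    have : ((Θ (b f) : H)) = ((adjA (Θ f) : H)) := by
      apply hdense.eq_of_inner_left (𝕜 := ℂ)
      intro v hv
      exact h ⟨v, hv⟩
    exact Subtype.ext this
  have keyn : ∀ n : ℕ, Θ ((b ^ n) φ₀) = (adjA ^ n) Ψ₀ := by
    intro n
    induction n with
    | zero => simpa using hΨ0def.symm
    | succ n ih =>
        rw [pow_succ', pow_succ']
        simp only [Module.End.mul_apply]
        rw [key, ih]
  constructor
  · rw [hΨ0def, ← hΘconj, hφ0, map_zero]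
  · intro n
    rw [hφ, hΨ, map_smul, keyn]
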